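/- Let n ≥ 2, let λ be dominant for SU(n) (λ₁ ≥ ... ≥ λ_{n-1} ≥ λₙ = 0), and suppose nonnegative integers t₁,...,tₙ satisfy ∑ t_i = ∑_{i=1}^{n-1} λ_i, with p_i = t_i - tₙ. Then 1 + λ₁ ≥ (1/n²)(∑_{i=1}^{n-1}|p_i| + 1). -/
import Mathlib


open Finset

set_option maxHeartbeats 1000000 in
/-- Lower bound on the length `λ₁` of any `SU(n)` dominant weight whose
tableau content realizes the torus character `p`:
`1 + λ₁ ≥ (1/n²)(∑|pᵢ| + 1)`. -/
theorem stmt_19 (n : ℕ) (hn : 2 ≤ n) (lam : Fin n → ℤ)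
    (hmono : ∀ i j : Fin n, i ≤ j → lam j ≤ lam i)
    (hlast : lam ⟨n - 1, by omega⟩ = 0)
    (t : Fin n → ℤ) (ht : ∀ i, 0 ≤ t i)
    (hsum : ∑ i, t i = ∑ i ∈ univ.filter (fun i : Fin n => (i : ℕ) < n - 1), lam i)
    (p : Fin n → ℤ) (hpdef : ∀ i, p i = t i - t ⟨n - 1, by omega⟩) :
    ((1 : ℝ) + (lam ⟨0, by omega⟩ : ℝ)) ≥
      (1 / (n : ℝ) ^ 2) *
        ((∑ i ∈ univ.filter (fun i : Fin n => (i : ℕ) < n - 1), |(p i : ℝ)|) + 1) := by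
  have hn1 : 0 < n := by omega
  set N : Fin n := ⟨n - 1, by omega⟩ with hN
  set s : Finset (Fin n) := univ.filter (fun i : Fin n => (i : ℕ) < n - 1) with hs
  set L : ℤ := lam ⟨0, by omega⟩ with hL
  -- λ₁ ≥ 0
  have hL0 : 0 ≤ L := by
    have := hmono ⟨0, by omega⟩ N (by simp [Fin.le_def])
    rw [hlast] at this; exact this
  -- each λ_i ≤ λ₁
  have hlamle : ∀ i : Fin n, lam i ≤ L :=
    fun i => hmono ⟨0, by omega⟩ i (by simp [Fin.le_def])
  -- card bound
  have hcard : s.card ≤ n - 1 := by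
    have hsub : s ⊆ univ.erase N := by
      intro i hi
      simp only [hs, mem_filter] at hi
      refine mem_erase.mpr ⟨?_, mem_univ i⟩
      intro h
      have hv : (i : ℕ) = n - 1 := by rw [h]
      have := hi.2
      omega
    calc s.card ≤ (univ.erase N).card := card_le_card hsub
      _ = n - 1 := by rw [card_erase_of_mem (mem_univ N), card_univ, Fintype.card_fin]
  -- S = sum of λ over s
  set S : ℤ := ∑ i ∈ s, lam i with hS
  have hSle : S ≤ ((n : ℤ) - 1) * L := by
    have h1 : S ≤ s.card • L := Finset.sum_le_card_nsmul s lam L (fun i _ => hlamle i)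
    have h2 : (s.card : ℤ) ≤ (n : ℤ) - 1 := by
      have := hcard; omega
    calc S ≤ (s.card : ℤ) * L := by rwa [nsmul_eq_mul] at h1
      _ ≤ ((n : ℤ) - 1) * L := by nlinarith
  -- t_N ≤ S
  have htN : t N ≤ S := by
    rw [← hsum]
    exact Finset.single_le_sum (fun i _ => ht i) (mem_univ N)
  have htN0 : 0 ≤ t N := ht N
  -- sum of t over s ≤ S
  have htsum : ∑ i ∈ s, t i ≤ S := by
    rw [← hsum]
    exact Finset.sum_le_sum_of_subset_of_nonneg (subset_univ s) (fun i _ _ => ht i)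
  -- bound on A = ∑ |p i|
  set A : ℤ := ∑ i ∈ s, |p i| with hA
  have hAle : A ≤ S + ((n : ℤ) - 1) * t N := by
    have h1 : A ≤ ∑ i ∈ s, (t i + t N) := by
      apply Finset.sum_le_sum
      intro i _
      rw [hpdef i]
      calc |t i - t N| ≤ |t i| + |t N| := abs_sub (t i) (t N)
        _ = t i + t N := by rw [abs_of_nonneg (ht i), abs_of_nonneg htN0]
    have h2 : ∑ i ∈ s, (t i + t N) = (∑ i ∈ s, t i) + s.card • t N := by
      rw [Finset.sum_add_distrib, Finset.sum_const]
    have h3 : (s.card : ℤ) ≤ (n : ℤ) - 1 := by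
      have := hcard; omega
    have h4 : s.card • t N ≤ ((n : ℤ) - 1) * t N := by
      rw [nsmul_eq_mul]; nlinarith
    omega
  -- integer inequality
  have hkey : A + 1 ≤ (n : ℤ) ^ 2 * (1 + L) := by
    have hnz : (2 : ℤ) ≤ (n : ℤ) := by exact_mod_cast hn
    nlinarith [hL0, htN0, htN, hSle, hAle]
  -- pass to ℝ
  have hnR : (0 : ℝ) < (n : ℝ) ^ 2 := by positivity
  rw [ge_iff_le, one_div, inv_mul_le_iff₀ hnR]
  have hcast : (∑ i ∈ s, |(p i : ℝ)|) = (A : ℝ) := by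
    rw [hA]; push_cast; rfl
  rw [hcast]
  have := hkey
  have h' : ((A : ℝ) + 1) ≤ ((n : ℝ) ^ 2) * (1 + (L : ℝ)) := by exact_mod_cast hkey
  linarith
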